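/- There exists a constant C > 0 such that for every n ≥ 1 and all a, b ∈ ℝⁿ, ‖F(a+b) − F(a) − F(b)‖₂ ≤ C·(‖a‖₂ + ‖b‖₂), i.e. the Kalton–Peck map F is quasi-linear with a constant independent of n. -/

import Mathlib

open scoped BigOperators

/-- The Euclidean norm on `ℝⁿ`. -/
noncomputable def l2 {n : ℕ} (b : Fin n → ℝ) : ℝ := Real.sqrt (∑ j, b j ^ 2)

/-- The Kalton–Peck map `F(b)_j = b_j log(|b_j|/‖b‖₂)`, with `F(b)_j = 0` when `b_j = 0`. -/
noncomputable def KPF {n : ℕ} (b : Fin n → ℝ) : Fin n → ℝ :=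
  fun j => if b j = 0 then 0 else b j * Real.log (|b j| / l2 b)

/-- The Kalton–Peck quasi-norm `‖(a,b)‖ = ‖b‖₂ + ‖a - F(b)‖₂` on `ℝⁿ × ℝⁿ`. -/
noncomputable def znorm {n : ℕ} (x : (Fin n → ℝ) × (Fin n → ℝ)) : ℝ :=
  l2 x.2 + l2 (x.1 - KPF x.2)

/-- Operator "norm" `sup_{x ≠ 0} N_W(T x) / N_V(x)` of a map `T` between spaces
equipped with (quasi-)norms `N_V`, `N_W`. -/
noncomputable def ratioSup {V W : Type*} [Zero V] (NV : V → ℝ) (NW : W → ℝ) (T : V → W) : ℝ :=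
  ⨆ x : {x : V // x ≠ 0}, NW (T x.1) / NV x.1

noncomputable def gKP (t : ℝ) : ℝ := t * Real.log |t|

lemma gKP_zero : gKP 0 = 0 := by simp [gKP]

lemma gKP_neg (t : ℝ) : gKP (-t) = - gKP t := by simp [gKP]

lemma key_nonneg (u v : ℝ) (hu : 0 ≤ u) (hv : 0 ≤ v) :
    |gKP (u + v) - gKP u - gKP v| ≤ u + v := by
  rcases hu.eq_or_lt with h | hu'
  · simpa [← h, gKP_zero] using hv
  rcases hv.eq_or_lt with h | hv'
  · simpa [← h, gKP_zero] using hu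
  have huv : 0 < u + v := by linarith
  have e : gKP (u + v) - gKP u - gKP v
      = u * (Real.log (u + v) - Real.log u) + v * (Real.log (u + v) - Real.log v) := by
    unfold gKP
    rw [abs_of_pos huv, abs_of_pos hu', abs_of_pos hv']
    ring
  have h1 : 0 ≤ Real.log (u + v) - Real.log u :=
    sub_nonneg.2 (Real.log_le_log hu' (by linarith))
  have h2 : 0 ≤ Real.log (u + v) - Real.log v :=
    sub_nonneg.2 (Real.log_le_log hv' (by linarith))
  have h3 : u * (Real.log (u + v) - Real.log u) ≤ v := by
    have hd : Real.log ((u + v) / u) ≤ (u + v) / u - 1 :=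
      Real.log_le_sub_one_of_pos (by positivity)
    rw [Real.log_div (by positivity) (by positivity)] at hd
    have : u * (Real.log (u + v) - Real.log u) ≤ u * ((u + v) / u - 1) := by
      exact mul_le_mul_of_nonneg_left hd hu
    calc u * (Real.log (u + v) - Real.log u) ≤ u * ((u + v) / u - 1) := this
      _ = v := by field_simp; ring
  have h4 : v * (Real.log (u + v) - Real.log v) ≤ u := by
    have hd : Real.log ((u + v) / v) ≤ (u + v) / v - 1 :=
      Real.log_le_sub_one_of_pos (by positivity)
    rw [Real.log_div (by positivity) (by positivity)] at hd
    calc v * (Real.log (u + v) - Real.log v) ≤ v * ((u + v) / v - 1) :=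
        mul_le_mul_of_nonneg_left hd hv
      _ = u := by field_simp; ring
  rw [e]
  have p1 : 0 ≤ u * (Real.log (u + v) - Real.log u) := by positivity
  have p2 : 0 ≤ v * (Real.log (u + v) - Real.log v) := by positivity
  rw [abs_of_nonneg (by linarith)]
  linarith

lemma key_aux (u v : ℝ) (hu : 0 ≤ u) :
    |gKP (u + v) - gKP u - gKP v| ≤ |u| + |v| := by
  rcases le_or_gt 0 v with hv | hv
  · rw [abs_of_nonneg hu, abs_of_nonneg hv]
    exact key_nonneg u v hu hv
  · set t := -v with ht
    have ht0 : 0 < t := by simp [ht]; linarith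
    rcases le_or_gt t u with h | h
    · have e : gKP (u + v) - gKP u - gKP v
          = -(gKP ((u - t) + t) - gKP (u - t) - gKP t) := by
        have e1 : u + v = u - t := by rw [ht]; ring
        have e2 : (u - t) + t = u := by ring
        have e3 : gKP v = - gKP t := by rw [ht]; simp [gKP_neg]
        rw [e1, e2, e3]; ring
      rw [e, abs_neg]
      calc |gKP ((u - t) + t) - gKP (u - t) - gKP t| ≤ (u - t) + t :=
          key_nonneg (u - t) t (by linarith) (le_of_lt ht0)
        _ = u := by ring
        _ ≤ |u| + |v| := by
            rw [abs_of_nonneg hu]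
            have := abs_nonneg v
            linarith
    · have e : gKP (u + v) - gKP u - gKP v
          = gKP ((t - u) + u) - gKP (t - u) - gKP u := by
        have e1 : u + v = -(t - u) := by rw [ht]; ring
        have e3 : gKP v = - gKP t := by rw [ht]; simp [gKP_neg]
        have e4 : (t - u) + u = t := by ring
        rw [e1, gKP_neg, e3, e4]; ring
      rw [e]
      have := key_nonneg (t - u) u (by linarith) hu
      calc |gKP ((t - u) + u) - gKP (t - u) - gKP u| ≤ (t - u) + u := this
        _ = t := by ring
        _ ≤ |u| + |v| := by
            rw [abs_of_neg hv, ht]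
            have := abs_nonneg u
            linarith

lemma key (u v : ℝ) : |gKP (u + v) - gKP u - gKP v| ≤ |u| + |v| := by
  rcases le_or_gt 0 u with hu | hu
  · exact key_aux u v hu
  · have h := key_aux (-u) (-v) (by linarith)
    have e : gKP (-u + -v) - gKP (-u) - gKP (-v)
        = -(gKP (u + v) - gKP u - gKP v) := by
      have : -u + -v = -(u + v) := by ring
      rw [this, gKP_neg, gKP_neg, gKP_neg]; ring
    rw [e, abs_neg, abs_neg, abs_neg] at h
    exact h

lemma lemB (t T : ℝ) (h0 : 0 ≤ t) (h1 : t ≤ T) : |t * Real.log (t / T)| ≤ T := by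
  rcases h0.eq_or_lt with h | h
  · simp [← h]; linarith
  · have hT : 0 < T := lt_of_lt_of_le h h1
    have hle : Real.log (t / T) ≤ 0 :=
      Real.log_nonpos (by positivity) (by rw [div_le_one hT]; exact h1)
    have e : |t * Real.log (t / T)| = t * Real.log (T / t) := by
      rw [abs_of_nonpos (mul_nonpos_of_nonneg_of_nonpos h0 hle)]
      rw [Real.log_div (by positivity) (by positivity), Real.log_div (by positivity) (by positivity)]
      ring
    rw [e]
    have hd : Real.log (T / t) ≤ T / t - 1 := Real.log_le_sub_one_of_pos (by positivity)
    calc t * Real.log (T / t) ≤ t * (T / t - 1) := mul_le_mul_of_nonneg_left hd h0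
      _ = T - t := by field_simp
      _ ≤ T := by linarith

lemma l2_nonneg {n : ℕ} (x : Fin n → ℝ) : 0 ≤ l2 x := Real.sqrt_nonneg _

lemma l2_eq_norm {n : ℕ} (x : Fin n → ℝ) :
    l2 x = ‖(WithLp.equiv 2 (Fin n → ℝ)).symm x‖ := by
  rw [EuclideanSpace.norm_eq]
  simp [l2, sq_abs]

lemma l2_add_le {n : ℕ} (x y : Fin n → ℝ) : l2 (x + y) ≤ l2 x + l2 y := by
  rw [l2_eq_norm, l2_eq_norm, l2_eq_norm, WithLp.equiv_symm_apply, WithLp.toLp_add]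
  exact norm_add_le _ _

lemma l2_neg {n : ℕ} (x : Fin n → ℝ) : l2 (-x) = l2 x := by
  simp [l2, neg_sq]

lemma l2_abs {n : ℕ} (x : Fin n → ℝ) : l2 (fun j => |x j|) = l2 x := by
  simp [l2, sq_abs]

lemma l2_mono {n : ℕ} (u v : Fin n → ℝ) (h : ∀ j, |u j| ≤ v j) : l2 u ≤ l2 v := by
  apply Real.sqrt_le_sqrt
  apply Finset.sum_le_sum
  intro j _
  have := h j
  have h2 : (u j) ^ 2 = |u j| ^ 2 := (sq_abs _).symm
  rw [h2]
  exact pow_le_pow_left₀ (abs_nonneg _) this 2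

lemma l2_mul_const {n : ℕ} (x : Fin n → ℝ) (c : ℝ) :
    l2 (fun j => x j * c) = l2 x * |c| := by
  simp only [l2, mul_pow]
  rw [← Finset.sum_mul, Real.sqrt_mul (by positivity), Real.sqrt_sq_eq_abs]

lemma abs_le_l2 {n : ℕ} (x : Fin n → ℝ) (j : Fin n) : |x j| ≤ l2 x := by
  rw [← Real.sqrt_sq_eq_abs]
  apply Real.sqrt_le_sqrt
  exact Finset.single_le_sum (fun i _ => sq_nonneg (x i)) (Finset.mem_univ j)

lemma l2_pos {n : ℕ} (x : Fin n → ℝ) (j : Fin n) (h : x j ≠ 0) : 0 < l2 x :=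
  lt_of_lt_of_le (abs_pos.2 h) (abs_le_l2 x j)

lemma l2_eq_zero {n : ℕ} (x : Fin n → ℝ) (h : l2 x = 0) : x = 0 := by
  funext j
  have := abs_le_l2 x j
  rw [h] at this
  have := abs_nonneg (x j)
  simp only [Pi.zero_apply]
  have : |x j| = 0 := le_antisymm (by linarith) (abs_nonneg _)
  exact abs_eq_zero.1 this

/-- The Kalton–Peck map `F` is quasi-linear with a constant independent of the dimension. -/
theorem kalton_peck_quasilinear :
    ∃ C : ℝ, 0 < C ∧ ∀ n : ℕ, 1 ≤ n → ∀ a b : Fin n → ℝ,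
      l2 (KPF (a + b) - KPF a - KPF b) ≤ C * (l2 a + l2 b) := by
  refine ⟨5, by norm_num, ?_⟩
  intro n _ a b
  set T : ℝ := l2 a + l2 b with hT
  rcases (add_nonneg (l2_nonneg a) (l2_nonneg b)).eq_or_lt with hT0 | hT0
  · -- T = 0 : a = b = 0
    have ha : l2 a = 0 := le_antisymm (by rw [← hT] at hT0; have := l2_nonneg b; linarith) (l2_nonneg a)
    have hb : l2 b = 0 := le_antisymm (by rw [← hT] at hT0; have := l2_nonneg a; linarith) (l2_nonneg b)
    have ha0 := l2_eq_zero a ha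
    have hb0 := l2_eq_zero b hb
    subst ha0; subst hb0
    have : KPF ((0 : Fin n → ℝ) + 0) - KPF 0 - KPF 0 = 0 := by
      funext j; simp [KPF]
    rw [this]
    have hz : l2 (0 : Fin n → ℝ) = 0 := by simp [l2]
    rw [hz]
    have := l2_nonneg (0 : Fin n → ℝ)
    linarith
  · -- main case, T > 0
    have hTne : T ≠ 0 := ne_of_gt hT0
    -- decomposition of KPF
    have hKPF : ∀ (x : Fin n → ℝ) (j : Fin n),
        KPF x j = gKP (x j) - x j * Real.log (l2 x / T) - x j * Real.log T := by
      intro x j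
      by_cases hx : x j = 0
      · simp [KPF, hx, gKP]
      · have hl : 0 < l2 x := l2_pos x j hx
        simp only [KPF, hx, if_false, gKP]
        rw [Real.log_div (abs_ne_zero.2 hx) (ne_of_gt hl),
            Real.log_div (ne_of_gt hl) hTne]
        ring
    set ca : ℝ := Real.log (l2 a / T) with hca
    set cb : ℝ := Real.log (l2 b / T) with hcb
    set cs : ℝ := Real.log (l2 (a + b) / T) with hcs
    have hD : (KPF (a + b) - KPF a - KPF b) =
        (fun j => (gKP (a j + b j) - gKP (a j) - gKP (b j)))
        + ((fun j => (a j + b j) * -cs) + ((fun j => a j * ca) + (fun j => b j * cb))) := by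
      funext j
      simp only [Pi.sub_apply, Pi.add_apply, hKPF, hca, hcb, hcs]
      ring
    rw [hD]
    have step1 : l2 ((fun j => (gKP (a j + b j) - gKP (a j) - gKP (b j)))
        + ((fun j => (a j + b j) * -cs) + ((fun j => a j * ca) + (fun j => b j * cb))))
        ≤ l2 (fun j => (gKP (a j + b j) - gKP (a j) - gKP (b j)))
          + (l2 (fun j => (a j + b j) * -cs) + (l2 (fun j => a j * ca) + l2 (fun j => b j * cb))) := by
      refine (l2_add_le _ _).trans ?_
      gcongr
      refine (l2_add_le _ _).trans ?_
      gcongr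
      exact l2_add_le _ _
    refine step1.trans ?_
    -- bound each piece
    have habs : l2 (fun j => (gKP (a j + b j) - gKP (a j) - gKP (b j))) ≤ T := by
      have h1 : l2 (fun j => (gKP (a j + b j) - gKP (a j) - gKP (b j)))
          ≤ l2 (fun j => |a j| + |b j|) := by
        apply l2_mono
        intro j
        exact key (a j) (b j)
      refine h1.trans ?_
      have h2 : l2 (fun j => |a j| + |b j|) ≤ l2 (fun j => |a j|) + l2 (fun j => |b j|) := by
        have := l2_add_le (fun j => |a j|) (fun j => |b j|)
        exact this
      rw [l2_abs, l2_abs] at h2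
      exact h2
    have hsab : l2 (a + b) ≤ T := l2_add_le a b
    have piece : ∀ (x : Fin n → ℝ) (c : ℝ), c = Real.log (l2 x / T) → l2 x ≤ T →
        l2 (fun j => x j * c) ≤ T := by
      intro x c hc hx
      rw [l2_mul_const]
      have : l2 x * |c| = |l2 x * c| := by
        rw [abs_mul, abs_of_nonneg (l2_nonneg x)]
      rw [this, hc]
      exact lemB (l2 x) T (l2_nonneg x) hx
    have p1 : l2 (fun j => (a j + b j) * -cs) ≤ T := by
      have e : (fun j => (a j + b j) * -cs) = (fun j => -((a+b) j) * cs) := by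
        funext j; simp [Pi.add_apply]; ring
      rw [e]
      have e2 : l2 (fun j => -((a+b) j) * cs) = l2 (fun j => (a+b) j * cs) := by
        rw [l2_mul_const, l2_mul_const]
        congr 1
        simp only [l2, neg_sq]
      rw [e2]
      exact piece (a + b) cs hcs hsab
    have p2 : l2 (fun j => a j * ca) ≤ T :=
      piece a ca hca (by rw [hT]; have := l2_nonneg b; linarith)
    have p3 : l2 (fun j => b j * cb) ≤ T :=
      piece b cb hcb (by rw [hT]; have := l2_nonneg a; linarith)
    linarith
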